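/- Let M be a set, φ : M → ℝ → M a map, and f : M → ℝ → ℝ → ℝ a function such that: (i) for all x, t, t′, t″: f(φ(x,t), t′, t″) − f(x, t+t′, t″) + f(x, t, t′+t″) − f(x, t, t′) = 0; (ii) f(x,t,0) = 0 for all x, t; and (iii) for each x ∈ M the function (t,u) ↦ f(x,t,u) is continuously differentiable on ℝ². Let k(x,t) be the derivative of u ↦ f(x,t,u) at u = 0 and define h(x,t) = −∫₀ᵗ k(x,s) ds. Then for all x ∈ M and t, t′ ∈ ℝ: h(φ(x,t), t′) − h(x, t+t′) + h(x,t) = f(x,t,t′). -/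

import Mathlib

/-- Every local 2-cocycle over a flow is a coboundary: if `f` satisfies the cocycle identity
`f(φ(x,t),t',t'') − f(x,t+t',t'') + f(x,t,t'+t'') − f(x,t,t') = 0`, vanishes at `u = 0`, and is
continuously differentiable in `(t,u)`, then the 1-cochain `h(x,t) = −∫₀ᵗ k(x,s) ds`, where
`k(x,t)` is the derivative of `u ↦ f(x,t,u)` at `0`, satisfies
`h(φ(x,t),t') − h(x,t+t') + h(x,t) = f(x,t,t')`. -/
theorem flow_two_cocycle_is_coboundary
    {M : Type*} (φ : M → ℝ → M) (f : M → ℝ → ℝ → ℝ)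
    (hcocycle : ∀ (x : M) (t t' t'' : ℝ),
      f (φ x t) t' t'' - f x (t + t') t'' + f x t (t' + t'') - f x t t' = 0)
    (hzero : ∀ (x : M) (t : ℝ), f x t 0 = 0)
    (hC1 : ∀ x : M, ContDiff ℝ 1 (fun p : ℝ × ℝ => f x p.1 p.2))
    (k : M → ℝ → ℝ) (hk : ∀ (x : M) (t : ℝ), k x t = deriv (f x t) 0)
    (h : M → ℝ → ℝ) (hh : ∀ (x : M) (t : ℝ), h x t = -∫ s in (0 : ℝ)..t, k x s) :
    ∀ (x : M) (t t' : ℝ), h (φ x t) t' - h x (t + t') + h x t = f x t t' := by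
  -- differentiability in the second variable
  have hdiff : ∀ (y : M) (s : ℝ), DifferentiableAt ℝ (f y s) 0 := by
    intro y s
    have h1 : DifferentiableAt ℝ (fun p : ℝ × ℝ => f y p.1 p.2) (s, (0 : ℝ)) :=
      ((hC1 y).differentiable one_ne_zero).differentiableAt
    exact h1.comp (0 : ℝ) (DifferentiableAt.prodMk (differentiableAt_const s) differentiableAt_id)
  have hkd : ∀ (y : M) (s : ℝ), HasDerivAt (f y s) (k y s) 0 := by
    intro y s
    rw [hk]
    exact (hdiff y s).hasDerivAt
  -- k expressed via the total derivative, hence continuous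
  have kfderiv : ∀ (y : M) (s : ℝ),
      k y s = (fderiv ℝ (fun p : ℝ × ℝ => f y p.1 p.2) (s, (0 : ℝ))) ((0 : ℝ), (1 : ℝ)) := by
    intro y s
    have hF : HasFDerivAt (fun p : ℝ × ℝ => f y p.1 p.2)
        (fderiv ℝ (fun p : ℝ × ℝ => f y p.1 p.2) (s, (0 : ℝ))) (s, (0 : ℝ)) :=
      (((hC1 y).differentiable one_ne_zero) (s, (0 : ℝ))).hasFDerivAt
    have hg : HasDerivAt (fun u : ℝ => ((s : ℝ), u)) (((0 : ℝ), (1 : ℝ))) 0 :=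
      HasDerivAt.prodMk (hasDerivAt_const (0 : ℝ) s) (hasDerivAt_id 0)
    have hc := hF.comp_hasDerivAt 0 hg
    rw [hk]
    exact hc.deriv
  have kcont : ∀ y : M, Continuous (k y) := by
    intro y
    have h1 : Continuous (fun s : ℝ => fderiv ℝ (fun p : ℝ × ℝ => f y p.1 p.2) (s, (0 : ℝ))) :=
      ((hC1 y).continuous_fderiv one_ne_zero).comp (continuous_id.prodMk continuous_const)
    have h2 : Continuous (fun s : ℝ =>
        (fderiv ℝ (fun p : ℝ × ℝ => f y p.1 p.2) (s, (0 : ℝ))) ((0 : ℝ), (1 : ℝ))) :=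
      h1.clm_apply continuous_const
    have : k y = fun s : ℝ =>
        (fderiv ℝ (fun p : ℝ × ℝ => f y p.1 p.2) (s, (0 : ℝ))) ((0 : ℝ), (1 : ℝ)) :=
      funext fun s => kfderiv y s
    rw [this]; exact h2
  intro x t t'
  -- derivative of t' ↦ f x t t'
  have hderiv : ∀ s : ℝ, HasDerivAt (f x t) (k x (t + s) - k (φ x t) s) s := by
    intro s
    have heq : f x t = fun u => f x t s + f x (t + s) (u - s) - f (φ x t) s (u - s) := by
      funext u
      have hc := hcocycle x t s (u - s)
      have h2 : s + (u - s) = u := by ring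
      rw [h2] at hc
      linarith
    have dsub : HasDerivAt (fun u : ℝ => u - s) (1 : ℝ) s := (hasDerivAt_id s).sub_const s
    have hs0 : s - s = 0 := sub_self s
    have d1 : HasDerivAt (fun u : ℝ => f x (t + s) (u - s)) (k x (t + s)) s := by
      have hb : HasDerivAt (f x (t + s)) (k x (t + s)) (s - s) := hs0 ▸ hkd x (t + s)
      simpa [Function.comp_def] using HasDerivAt.comp (h := fun u : ℝ => u - s) s hb dsub
    have d2 : HasDerivAt (fun u : ℝ => f (φ x t) s (u - s)) (k (φ x t) s) s := by
      have hb : HasDerivAt (f (φ x t) s) (k (φ x t) s) (s - s) := hs0 ▸ hkd (φ x t) s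
      simpa [Function.comp_def] using HasDerivAt.comp (h := fun u : ℝ => u - s) s hb dsub
    rw [heq]
    simpa [Pi.add_def, Pi.sub_def] using ((hasDerivAt_const s (f x t s)).add d1).sub d2
  -- continuity / integrability
  have c1 : Continuous (fun s : ℝ => k x (t + s)) :=
    (kcont x).comp (continuous_const.add continuous_id)
  have c2 : Continuous (fun s : ℝ => k (φ x t) s) := kcont (φ x t)
  have hint : (∫ s in (0 : ℝ)..t', (k x (t + s) - k (φ x t) s)) = f x t t' := by
    have hFTC := intervalIntegral.integral_eq_sub_of_hasDerivAt
      (f := f x t) (f' := fun s => k x (t + s) - k (φ x t) s)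
      (fun s _ => hderiv s) ((c1.sub c2).intervalIntegrable 0 t')
    rw [hFTC, hzero, sub_zero]
  rw [intervalIntegral.integral_sub (c1.intervalIntegrable 0 t') (c2.intervalIntegrable 0 t')]
    at hint
  have hshift : (∫ s in (0 : ℝ)..t', k x (t + s)) = ∫ s in t..(t + t'), k x s := by
    have := intervalIntegral.integral_comp_add_left (a := (0 : ℝ)) (b := t') (fun s => k x s) t
    simpa using this
  have hsplit : (∫ s in (0 : ℝ)..(t + t'), k x s) - (∫ s in (0 : ℝ)..t, k x s)
      = ∫ s in t..(t + t'), k x s :=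
    intervalIntegral.integral_interval_sub_left ((kcont x).intervalIntegrable 0 (t + t'))
      ((kcont x).intervalIntegrable 0 t)
  rw [hh, hh, hh]
  rw [hshift] at hint
  linarith [hint, hsplit]
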